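/- Let 0 < γ < 1, 1 < p < r, and A, B, C > 0. Define φ(t) = (A/p) t^p - (λ C/(1-γ)) t^{1-γ} - (B/r) t^r for t > 0. Then there exists λ* > 0 such that for all 0 < λ < λ*, the equation φ'(t) = 0 has exactly two solutions 0 < t⁺ < t⁻, with φ''(t⁺) > 0 and φ''(t⁻) < 0. -/

import Mathlib

open Real Set

/-- First derivative of the fibering map at positive points. -/
lemma aux_phi_deriv (γ p r A B C lam : ℝ) (hγ1 : γ < 1)
    (hp : 1 < p) (hr : 1 < r) {t : ℝ} (ht : 0 < t) :
    HasDerivAt (fun t : ℝ => (A / p) * t ^ p - (lam * C / (1 - γ)) * t ^ (1 - γ)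
        - (B / r) * t ^ r)
      (A * t ^ (p - 1) - lam * C * t ^ (-γ) - B * t ^ (r - 1)) t := by
  have h1 := (Real.hasDerivAt_rpow_const (x := t) (p := p) (Or.inl ht.ne')).const_mul (A / p)
  have h2 := (Real.hasDerivAt_rpow_const (x := t) (p := 1 - γ)
    (Or.inl ht.ne')).const_mul (lam * C / (1 - γ))
  have h3 := (Real.hasDerivAt_rpow_const (x := t) (p := r) (Or.inl ht.ne')).const_mul (B / r)
  have h := (h1.sub h2).sub h3
  convert h using 1
  case e'_4 => rfl
  case e'_5 => rfl
  case e'_8 => rfl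
  have hγ : (1 : ℝ) - γ ≠ 0 := ne_of_gt (by linarith)
  have hp0 : p ≠ 0 := by positivity
  have hr0 : r ≠ 0 := by positivity
  rw [show (1 : ℝ) - γ - 1 = -γ by ring]
  field_simp

/-- Second derivative of the fibering map at positive points. -/
lemma aux_phi_deriv2 (γ p r A B C lam : ℝ) {t : ℝ} (ht : 0 < t) :
    HasDerivAt (fun t : ℝ => A * t ^ (p - 1) - lam * C * t ^ (-γ) - B * t ^ (r - 1))
      (A * (p - 1) * t ^ (p - 2) + lam * C * γ * t ^ (-γ - 1)
        - B * (r - 1) * t ^ (r - 2)) t := by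
  have h1 := (Real.hasDerivAt_rpow_const (x := t) (p := p - 1) (Or.inl ht.ne')).const_mul A
  have h2 := (Real.hasDerivAt_rpow_const (x := t) (p := -γ)
    (Or.inl ht.ne')).const_mul (lam * C)
  have h3 := (Real.hasDerivAt_rpow_const (x := t) (p := r - 1) (Or.inl ht.ne')).const_mul B
  have h := (h1.sub h2).sub h3
  convert h using 1
  case e'_4 => rfl
  case e'_5 => rfl
  case e'_8 => rfl
  rw [show p - 1 - 1 = p - 2 by ring, show r - 1 - 1 = r - 2 by ring]
  ring

set_option maxHeartbeats 1000000 in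
/-- Fibering map dichotomy, constant-exponent case: for small λ > 0 the map
φ(t) = (A/p) t^p - (λC/(1-γ)) t^{1-γ} - (B/r) t^r has exactly two positive
critical points t⁺ < t⁻, with φ''(t⁺) > 0 and φ''(t⁻) < 0. -/
theorem stmt_5 (γ p r A B C : ℝ) (hγ0 : 0 < γ) (hγ1 : γ < 1)
    (hp : 1 < p) (hpr : p < r) (hA : 0 < A) (hB : 0 < B) (hC : 0 < C) :
    ∃ lamStar > (0 : ℝ), ∀ lam : ℝ, 0 < lam → lam < lamStar →
      ∃ tp tm : ℝ, 0 < tp ∧ tp < tm ∧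
        (let φ : ℝ → ℝ :=
          fun t => (A / p) * t ^ p - (lam * C / (1 - γ)) * t ^ (1 - γ) - (B / r) * t ^ r
         deriv φ tp = 0 ∧ deriv φ tm = 0 ∧
         (∀ t : ℝ, 0 < t → deriv φ t = 0 → t = tp ∨ t = tm) ∧
         0 < deriv (deriv φ) tp ∧ deriv (deriv φ) tm < 0) := by
  have hr : 1 < r := hp.trans hpr
  set a : ℝ := p - 1 + γ with ha
  set b : ℝ := r - 1 + γ with hb
  set d : ℝ := r - p with hd
  have ha0 : 0 < a := by rw [ha]; linarith
  have hb0 : 0 < b := by rw [hb]; linarith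
  have hd0 : 0 < d := by rw [hd]; linarith
  have hab : a < b := by rw [ha, hb]; linarith
  set g : ℝ → ℝ := fun t => A * t ^ a - B * t ^ b with hg
  set K : ℝ := A * a / (B * b) with hK
  have hK0 : 0 < K := by rw [hK]; positivity
  set t₀ : ℝ := K ^ (1 / d) with ht₀
  have ht₀0 : 0 < t₀ := Real.rpow_pos_of_pos hK0 _
  have ht₀d : t₀ ^ d = K := by
    rw [ht₀, ← Real.rpow_mul hK0.le, one_div_mul_cancel hd0.ne', Real.rpow_one]
  -- sign of A*a - B*b*t^d
  have hsgn_lt : ∀ t : ℝ, 0 < t → t < t₀ → B * b * t ^ d < A * a := by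
    intro t ht htt
    have h1 : t ^ d < K := by
      rw [← ht₀d]; exact Real.rpow_lt_rpow ht.le htt hd0
    have hBb : 0 < B * b := by positivity
    calc B * b * t ^ d < B * b * K := by nlinarith
      _ = A * a := by rw [hK]; field_simp
  have hsgn_gt : ∀ t : ℝ, t₀ < t → A * a < B * b * t ^ d := by
    intro t htt
    have h1 : K < t ^ d := by
      rw [← ht₀d]; exact Real.rpow_lt_rpow ht₀0.le htt hd0
    have hBb : 0 < B * b := by positivity
    calc A * a = B * b * K := by rw [hK]; field_simp
      _ < B * b * t ^ d := by nlinarith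
  -- derivative of g
  have hg' : ∀ t : ℝ, 0 < t → HasDerivAt g (t ^ (a - 1) * (A * a - B * b * t ^ d)) t := by
    intro t ht
    have h1 := (Real.hasDerivAt_rpow_const (x := t) (p := a) (Or.inl ht.ne')).const_mul A
    have h2 := (Real.hasDerivAt_rpow_const (x := t) (p := b) (Or.inl ht.ne')).const_mul B
    have h := h1.sub h2
    convert h using 1
    case e'_4 => rfl
    case e'_5 => rfl
    case e'_8 => rfl
    rw [show b - 1 = (a - 1) + d by rw [ha, hb, hd]; ring, Real.rpow_add ht]
    ring
  have hgc : Continuous g := by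
    rw [hg]
    exact (continuous_const.mul (Real.continuous_rpow_const ha0.le)).sub
      (continuous_const.mul (Real.continuous_rpow_const hb0.le))
  have hmono : StrictMonoOn g (Icc 0 t₀) := by
    apply strictMonoOn_of_deriv_pos (convex_Icc _ _) hgc.continuousOn
    intro x hx
    rw [interior_Icc] at hx
    rw [(hg' x hx.1).deriv]
    have := hsgn_lt x hx.1 hx.2
    have : 0 < A * a - B * b * x ^ d := by linarith
    have hx1 : (0 : ℝ) < x ^ (a - 1) := Real.rpow_pos_of_pos hx.1 _
    positivity
  have hanti : StrictAntiOn g (Ici t₀) := by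
    apply strictAntiOn_of_deriv_neg (convex_Ici _) hgc.continuousOn
    intro x hx
    rw [interior_Ici] at hx
    rw [(hg' x (ht₀0.trans hx)).deriv]
    have := hsgn_gt x hx
    have h1 : A * a - B * b * x ^ d < 0 := by linarith
    have hx1 : (0 : ℝ) < x ^ (a - 1) := Real.rpow_pos_of_pos (ht₀0.trans hx) _
    exact mul_neg_of_pos_of_neg hx1 h1
  have hg0 : g 0 = 0 := by
    rw [hg]; simp [Real.zero_rpow ha0.ne', Real.zero_rpow hb0.ne']
  set M : ℝ := g t₀ with hM
  have hBt₀d : B * t₀ ^ d = A * a / b := by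
    rw [ht₀d, hK]; field_simp
  have hMval : M = t₀ ^ a * (A - B * t₀ ^ d) := by
    rw [hM]; simp only [hg]
    rw [show t₀ ^ b = t₀ ^ a * t₀ ^ d from by
      rw [← Real.rpow_add ht₀0, show a + d = b by rw [ha, hb, hd]; ring]]
    ring
  have hM0 : 0 < M := by
    rw [hMval, hBt₀d]
    have h1 : (0 : ℝ) < t₀ ^ a := Real.rpow_pos_of_pos ht₀0 _
    have h2 : A * a / b < A := by
      rw [div_lt_iff₀ hb0]; nlinarith
    have : 0 < A - A * a / b := by linarith
    positivity
  -- the threshold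
  refine ⟨M / C, by positivity, fun lam hlam0 hlamM => ?_⟩
  have hlC : lam * C < M := by
    have := (lt_div_iff₀ hC).mp hlamM; linarith
  have hlC0 : 0 < lam * C := by positivity
  -- existence of tp
  obtain ⟨tp, htpmem, hgtp⟩ : ∃ tp ∈ Ioo (0 : ℝ) t₀, g tp = lam * C := by
    have h := intermediate_value_Ioo ht₀0.le hgc.continuousOn (a := 0) (b := t₀)
    have : lam * C ∈ Ioo (g 0) (g t₀) := by rw [hg0, ← hM]; exact ⟨hlC0, hlC⟩
    obtain ⟨x, hx, hgx⟩ := h this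
    exact ⟨x, hx, hgx⟩
  -- a point where g is negative
  set s : ℝ := (A / B) ^ (1 / d) with hs
  have hABpos : (0 : ℝ) < A / B := by positivity
  have hsd : s ^ d = A / B := by
    rw [hs, ← Real.rpow_mul hABpos.le, one_div_mul_cancel hd0.ne', Real.rpow_one]
  have hs0 : 0 < s := Real.rpow_pos_of_pos hABpos _
  set T : ℝ := s + 1 with hT
  have hsT : s < T := by rw [hT]; linarith
  have ht₀s : t₀ ≤ s := by
    rw [ht₀, hs]
    apply Real.rpow_le_rpow hK0.le _ (by positivity)
    rw [hK, div_le_div_iff₀ (by positivity) hB]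
    nlinarith [mul_lt_mul_of_pos_left hab (mul_pos hA hB)]
  have ht₀T : t₀ < T := lt_of_le_of_lt ht₀s hsT
  have hgT : g T < 0 := by
    have h1 : A / B < T ^ d := by
      rw [← hsd]; exact Real.rpow_lt_rpow hs0.le hsT hd0
    have h2 : A < B * T ^ d := by
      rw [div_lt_iff₀ hB] at h1; linarith [h1]
    have hT0 : 0 < T := hs0.trans hsT
    have h3 : g T = T ^ a * (A - B * T ^ d) := by
      simp only [hg]
      rw [show T ^ b = T ^ a * T ^ d from by
        rw [← Real.rpow_add hT0, show a + d = b by rw [ha, hb, hd]; ring]]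
      ring
    rw [h3]
    have hTa : (0 : ℝ) < T ^ a := Real.rpow_pos_of_pos hT0 _
    nlinarith
  -- existence of tm
  obtain ⟨tm, htmmem, hgtm⟩ : ∃ tm ∈ Ioo t₀ T, g tm = lam * C := by
    have h := intermediate_value_Ioo' ht₀T.le hgc.continuousOn (a := t₀) (b := T)
    have : lam * C ∈ Ioo (g T) (g t₀) := by rw [← hM]; exact ⟨hgT.trans hlC0, hlC⟩
    obtain ⟨x, hx, hgx⟩ := h this
    exact ⟨x, hx, hgx⟩
  have htp0 : 0 < tp := htpmem.1
  have htm0 : 0 < tm := ht₀0.trans htmmem.1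
  have htptm : tp < tm := htpmem.2.trans htmmem.1
  set φ : ℝ → ℝ :=
    fun t => (A / p) * t ^ p - (lam * C / (1 - γ)) * t ^ (1 - γ) - (B / r) * t ^ r with hφ
  set ψ : ℝ → ℝ :=
    fun t => A * t ^ (p - 1) - lam * C * t ^ (-γ) - B * t ^ (r - 1) with hψ
  have hderiv : ∀ t : ℝ, 0 < t → deriv φ t = ψ t := fun t ht =>
    (aux_phi_deriv γ p r A B C lam hγ1 hp hr ht).deriv
  -- key identity: ψ t = t^(-γ) * (g t - lam*C)
  have hψg : ∀ t : ℝ, 0 < t → ψ t = t ^ (-γ) * (g t - lam * C) := by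
    intro t ht
    simp only [hψ, hg]
    rw [show p - 1 = a + -γ by rw [ha]; ring, show r - 1 = b + -γ by rw [hb]; ring,
      Real.rpow_add ht a, Real.rpow_add ht b]
    ring
  have hψzero : ∀ t : ℝ, 0 < t → (ψ t = 0 ↔ g t = lam * C) := by
    intro t ht
    rw [hψg t ht]
    have h1 : (0 : ℝ) < t ^ (-γ) := Real.rpow_pos_of_pos ht _
    constructor
    · intro h
      rcases mul_eq_zero.mp h with h | h
      · exact absurd h h1.ne'
      · linarith
    · intro h; rw [h]; ring
  -- second derivative at a root of g - lam*C
  have hsecond : ∀ t : ℝ, 0 < t → g t = lam * C →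
      deriv (deriv φ) t = t ^ (p - 2) * (A * a - B * b * t ^ d) := by
    intro t ht hroot
    have hev : deriv φ =ᶠ[nhds t] ψ := by
      filter_upwards [IsOpen.mem_nhds isOpen_Ioi ht] with x hx
      exact hderiv x hx
    rw [hev.deriv_eq, (aux_phi_deriv2 γ p r A B C lam ht).deriv]
    have hlamC : lam * C = A * t ^ a - B * t ^ b := by rw [← hroot]
    have e1 : t ^ a = t ^ (p - 2) * t ^ (γ + 1) := by
      rw [← Real.rpow_add ht, show p - 2 + (γ + 1) = a by rw [ha]; ring]
    have e2 : t ^ b = t ^ (r - 2) * t ^ (γ + 1) := by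
      rw [← Real.rpow_add ht, show r - 2 + (γ + 1) = b by rw [hb]; ring]
    have e3 : t ^ (-γ - 1) = (t ^ (γ + 1))⁻¹ := by
      rw [show -γ - 1 = -(γ + 1) by ring, Real.rpow_neg ht.le]
    have e4 : t ^ (r - 2) = t ^ (p - 2) * t ^ d := by
      rw [← Real.rpow_add ht, show p - 2 + d = r - 2 by rw [hd]; ring]
    have hγ1pos : (0 : ℝ) < t ^ (γ + 1) := Real.rpow_pos_of_pos ht _
    rw [hlamC, e1, e2, e3, e4]
    field_simp
    ring
  refine ⟨tp, tm, htp0, htptm, ?_, ?_, ?_, ?_, ?_⟩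
  · rw [hderiv tp htp0]; exact (hψzero tp htp0).mpr hgtp
  · rw [hderiv tm htm0]; exact (hψzero tm htm0).mpr hgtm
  · intro t ht hdt
    rw [hderiv t ht] at hdt
    have hgt : g t = lam * C := (hψzero t ht).mp hdt
    rcases le_or_gt t t₀ with h | h
    · left
      exact hmono.injOn ⟨ht.le, h⟩ ⟨htpmem.1.le, htpmem.2.le⟩ (hgt.trans hgtp.symm)
    · right
      exact hanti.injOn (mem_Ici.mpr h.le) (mem_Ici.mpr htmmem.1.le) (hgt.trans hgtm.symm)
  · rw [hsecond tp htp0 hgtp]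
    have h1 := hsgn_lt tp htp0 htpmem.2
    have h2 : (0 : ℝ) < tp ^ (p - 2) := Real.rpow_pos_of_pos htp0 _
    have : 0 < A * a - B * b * tp ^ d := by linarith
    positivity
  · rw [hsecond tm htm0 hgtm]
    have h1 := hsgn_gt tm htmmem.1
    have h2 : (0 : ℝ) < tm ^ (p - 2) := Real.rpow_pos_of_pos htm0 _
    exact mul_neg_of_pos_of_neg h2 (by linarith)
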